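/- Under the CFL-type condition (1/3) h_t² (a_1²/h_1² + ... + a_n²/h_n²) ≤ (1-ε) ρ_min with 0 ≤ ε < 1, the operator I_{ρh} := ρ^{-1} I + (h_t²/12)(ρ^{-1} L_h)(ρ^{-1} I) is self-adjoint and satisfies ε ρ̄^{-1} I ≤ ε ρ^{-1} I < I_{ρh} < ρ^{-1} I ≤ ρ_min^{-1} I, where ρ^{-1} I denotes pointwise multiplication by 1/ρ(x). -/

import Mathlib

open RealInnerProductSpace

set_option maxHeartbeats 1600000 in
/-- under the CFL-type condition
`(1/3) h_t² ∑ aₖ²/hₖ² ≤ (1-ε) ρ_min`, the operator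
`I_{ρh} = ρ⁻¹ I + (h_t²/12)(ρ⁻¹ L_h)(ρ⁻¹ I)` is self-adjoint and satisfies
`ε ρ̄⁻¹ I ≤ ε ρ⁻¹ I < I_{ρh} < ρ⁻¹ I ≤ ρ_min⁻¹ I`. -/
theorem stmt_5 (d n : ℕ) (hd : 0 < d)
    (a h : Fin n → ℝ) (ha : ∀ k, 0 < a k) (hh : ∀ k, 0 < h k)
    (ht ε ρmin ρbar : ℝ) (hht : 0 < ht) (hε0 : 0 ≤ ε) (hε1 : ε < 1)
    (hρmin : 0 < ρmin)
    (ρ : Fin d → ℝ) (hρ : ∀ i, ρmin ≤ ρ i ∧ ρ i ≤ ρbar)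
    (L : EuclideanSpace ℝ (Fin d) →ₗ[ℝ] EuclideanSpace ℝ (Fin d))
    (hLsa : ∀ v w, ⟪L v, w⟫ = ⟪v, L w⟫)
    (hLbnd : ∀ w, w ≠ 0 → 0 < -⟪L w, w⟫ ∧
      -⟪L w, w⟫ < 4 * (∑ k, (a k) ^ 2 / (h k) ^ 2) * ⟪w, w⟫)
    (Minv : EuclideanSpace ℝ (Fin d) →ₗ[ℝ] EuclideanSpace ℝ (Fin d))
    (hMinv : ∀ (w : EuclideanSpace ℝ (Fin d)) (i : Fin d), Minv w i = w i / ρ i)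
    (hCFL : (1 / 3) * ht ^ 2 * (∑ k, (a k) ^ 2 / (h k) ^ 2) ≤ (1 - ε) * ρmin)
    (Iρh : EuclideanSpace ℝ (Fin d) →ₗ[ℝ] EuclideanSpace ℝ (Fin d))
    (hIρh : Iρh = Minv + (ht ^ 2 / 12) • (Minv ∘ₗ L ∘ₗ Minv)) :
    (∀ v w, ⟪Iρh v, w⟫ = ⟪v, Iρh w⟫) ∧
    ∀ w, w ≠ 0 →
      ε * (1 / ρbar) * ⟪w, w⟫ ≤ ε * ⟪Minv w, w⟫ ∧
      ε * ⟪Minv w, w⟫ < ⟪Iρh w, w⟫ ∧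
      ⟪Iρh w, w⟫ < ⟪Minv w, w⟫ ∧
      ⟪Minv w, w⟫ ≤ (1 / ρmin) * ⟪w, w⟫ := by

  classical
  have hρpos : ∀ i, 0 < ρ i := fun i => lt_of_lt_of_le hρmin (hρ i).1
  have hρbar : 0 < ρbar := by
    have i : Fin d := ⟨0, hd⟩
    exact lt_of_lt_of_le (hρpos i) (hρ i).2
  have hinner : ∀ v w : EuclideanSpace ℝ (Fin d), ⟪v, w⟫ = ∑ i, v i * w i := by
    intro v w
    simp [PiLp.inner_apply, RCLike.inner_apply, conj_trivial]
    exact Finset.sum_congr rfl fun i _ => mul_comm _ _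
  have hMsa : ∀ v w : EuclideanSpace ℝ (Fin d), ⟪Minv v, w⟫ = ⟪v, Minv w⟫ := by
    intro v w
    rw [hinner, hinner]
    refine Finset.sum_congr rfl fun i _ => ?_
    rw [hMinv, hMinv]; ring
  have hIsa : ∀ v w : EuclideanSpace ℝ (Fin d), ⟪Iρh v, w⟫ = ⟪v, Iρh w⟫ := by
    intro v w
    rw [hIρh]
    simp only [LinearMap.add_apply, LinearMap.smul_apply, LinearMap.comp_apply]
    rw [inner_add_left, inner_add_right, real_inner_smul_left, real_inner_smul_right,
      hMsa v w, hMsa (L (Minv v)) w, hLsa, hMsa]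
  refine ⟨hIsa, fun w hw => ?_⟩
  set S : ℝ := ∑ k, (a k) ^ 2 / (h k) ^ 2 with hSdef
  set u : EuclideanSpace ℝ (Fin d) := Minv w with hu
  have hune : u ≠ 0 := by
    intro h0
    apply hw
    refine PiLp.ext fun i => ?_
    have h1 : u i = 0 := by rw [h0]; rfl
    rw [hu, hMinv] at h1
    rcases div_eq_zero_iff.mp h1 with h2 | h2
    · exact h2
    · exact absurd h2 (hρpos i).ne'
  have hM : ⟪Minv w, w⟫ = ∑ i, w i ^ 2 / ρ i := by
    rw [hinner]
    refine Finset.sum_congr rfl fun i _ => ?_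
    rw [hMinv]; ring
  have hww : ⟪w, w⟫ = ∑ i, w i ^ 2 := by
    rw [hinner]
    exact Finset.sum_congr rfl fun i _ => (sq (w i)).symm
  have hUU : ⟪u, u⟫ = ∑ i, w i ^ 2 / ρ i ^ 2 := by
    rw [hinner]
    refine Finset.sum_congr rfl fun i _ => ?_
    rw [hu, hMinv]; ring
  have hex : ∃ i, w i ≠ 0 := by
    by_contra hall
    push_neg at hall
    exact hw (PiLp.ext hall)
  have hMpos : 0 < ⟪Minv w, w⟫ := by
    rw [hM]
    obtain ⟨i, hi⟩ := hex
    refine Finset.sum_pos' (fun j _ => div_nonneg (sq_nonneg _) (hρpos j).le)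
      ⟨i, Finset.mem_univ i, ?_⟩
    have h2 : 0 < w i ^ 2 := lt_of_le_of_ne (sq_nonneg _) (Ne.symm (pow_ne_zero 2 hi))
    exact div_pos h2 (hρpos i)
  have hMle : ⟪Minv w, w⟫ ≤ (1 / ρmin) * ⟪w, w⟫ := by
    rw [hM, hww, Finset.mul_sum]
    refine Finset.sum_le_sum fun i _ => ?_
    have h1 : w i ^ 2 / ρ i ≤ w i ^ 2 / ρmin := by
      gcongr <;> first | exact hρmin | exact (hρ i).1 | exact hρpos i | positivity
    have h2 : (1 : ℝ) / ρmin * w i ^ 2 = w i ^ 2 / ρmin := by ring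
    linarith
  have hMge : (1 / ρbar) * ⟪w, w⟫ ≤ ⟪Minv w, w⟫ := by
    rw [hM, hww, Finset.mul_sum]
    refine Finset.sum_le_sum fun i _ => ?_
    have h1 : w i ^ 2 / ρbar ≤ w i ^ 2 / ρ i := by
      gcongr <;> first | exact hρpos i | exact (hρ i).2 | positivity
    have h2 : (1 : ℝ) / ρbar * w i ^ 2 = w i ^ 2 / ρbar := by ring
    linarith
  have hUle : ⟪u, u⟫ ≤ (1 / ρmin) * ⟪Minv w, w⟫ := by
    rw [hUU, hM, Finset.mul_sum]
    refine Finset.sum_le_sum fun i _ => ?_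
    have e1 : w i ^ 2 / ρ i ^ 2 = (w i ^ 2 / ρ i) / ρ i := by ring
    have e2 : (1 : ℝ) / ρmin * (w i ^ 2 / ρ i) = (w i ^ 2 / ρ i) / ρmin := by ring
    rw [e1, e2]
    gcongr <;> first | exact hρmin | exact (hρ i).1 | (have := hρpos i; positivity)
  obtain ⟨hQ1, hQ2⟩ := hLbnd u hune
  have hUpos : 0 < ⟪u, u⟫ := by
    rw [hUU]
    obtain ⟨i, hi⟩ := hex
    refine Finset.sum_pos' (fun j _ => div_nonneg (sq_nonneg _) (sq_nonneg _))
      ⟨i, Finset.mem_univ i, ?_⟩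
    have h2 : 0 < w i ^ 2 := lt_of_le_of_ne (sq_nonneg _) (Ne.symm (pow_ne_zero 2 hi))
    exact div_pos h2 (pow_pos (hρpos i) 2)
  have hSpos : 0 < S := by nlinarith
  have hIexp : ⟪Iρh w, w⟫ = ⟪Minv w, w⟫ + (ht ^ 2 / 12) * ⟪L u, u⟫ := by
    rw [hIρh]
    simp only [LinearMap.add_apply, LinearMap.smul_apply, LinearMap.comp_apply]
    rw [inner_add_left, real_inner_smul_left, hMsa (L (Minv w)) w, ← hu]
  have hc : (0 : ℝ) < ht ^ 2 / 12 := by positivity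
  refine ⟨?_, ?_, ?_, ?_⟩
  · exact mul_le_mul_of_nonneg_left hMge hε0 |>.trans_eq' (by ring)
  · rw [hIexp]
    set M := ⟪Minv w, w⟫
    set U := ⟪u, u⟫
    set Q := ⟪L u, u⟫
    have step1 : (ht ^ 2 / 12) * (-Q) < (ht ^ 2 / 12) * (4 * S * U) :=
      mul_lt_mul_of_pos_left hQ2 hc
    have step2 : (ht ^ 2 / 12) * (4 * S * U) ≤ (ht ^ 2 / 12) * (4 * S * ((1 / ρmin) * M)) := by
      have h0 : (0 : ℝ) ≤ (ht ^ 2 / 12) * (4 * S) := by positivity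
      nlinarith [mul_le_mul_of_nonneg_left hUle h0]
    have step3 : (ht ^ 2 / 12) * (4 * S * ((1 / ρmin) * M))
        = ((1 / 3) * ht ^ 2 * S) * (M / ρmin) := by
      field_simp; ring
    have step4 : ((1 / 3) * ht ^ 2 * S) * (M / ρmin) ≤ ((1 - ε) * ρmin) * (M / ρmin) :=
      mul_le_mul_of_nonneg_right hCFL (by positivity)
    have step5 : ((1 - ε) * ρmin) * (M / ρmin) = (1 - ε) * M := by
      field_simp
    linarith
  · rw [hIexp]
    have h3 : 0 < (ht ^ 2 / 12) * (-⟪L u, u⟫) := mul_pos hc hQ1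
    linarith
  · exact hMle
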